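/- Let p = (p₁, …, pₙ) ∈ Dist(D_n, m) be a distribution on the dipole graph with n edges and m outcomes, and for each i let H_i be the bipartite simple graph on {u_0, …, u_{m−1}} ⊔ {w_0, …, w_{m−1}} with an edge between u_a and w_b iff (p_i)_{ab} ≠ 0. Then p is an extreme point of Dist(D_n, m) if and only if: (1) every H_i contains no cycle, and (2) the linear subspace K := {(α, β) ∈ ℝ^m × ℝ^m : for every i and every connected component C of H_i (including singleton components), Σ_{a : u_a ∈ C} α_a = Σ_{b : w_b ∈ C} β_b} has dimension exactly 1. (Since K is the kernel of the N×2m matrix Q(H₁, …, Hₙ), condition (2) is equivalent to rank Q(H₁, …, Hₙ) = 2m − 1.) -/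

import Mathlib

/-- The polytope `Dist(D_n, m)` of distributions on the dipole graph with `n`
parallel edges and `m` outcomes: tuples of `m × m` matrices with nonnegative
entries summing to `1`, all having the same row-sum vector and the same
column-sum vector. -/
def DipoleDist (n m : ℕ) : Set (Fin n → Matrix (Fin m) (Fin m) ℝ) :=
  {p | (∀ i a b, 0 ≤ p i a b) ∧ (∀ i, ∑ a, ∑ b, p i a b = 1) ∧
       (∀ i j a, ∑ b, p i a b = ∑ b, p j a b) ∧
       (∀ i j b, ∑ a, p i a b = ∑ a, p j a b)}

/-- The bipartite graph associated to an `m × m` matrix `q`: vertices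
`Sum.inl a` (left, `u_a`) and `Sum.inr b` (right, `w_b`), with an edge between
`u_a` and `w_b` iff `q a b ≠ 0`. -/
def Hmat {m : ℕ} (q : Matrix (Fin m) (Fin m) ℝ) : SimpleGraph (Fin m ⊕ Fin m) :=
  SimpleGraph.fromRel (fun v w =>
    ∃ a b : Fin m, q a b ≠ 0 ∧ v = Sum.inl a ∧ w = Sum.inr b)

open Finset SimpleGraph
open scoped Classical RealInnerProductSpace

lemma hmat_adj {m : ℕ} {q : Matrix (Fin m) (Fin m) ℝ} {a b : Fin m} :
    (Hmat q).Adj (Sum.inl a) (Sum.inr b) ↔ q a b ≠ 0 := by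
  simp [Hmat, SimpleGraph.fromRel_adj]

lemma hmat_adj_cases {m : ℕ} {q : Matrix (Fin m) (Fin m) ℝ} {v w : Fin m ⊕ Fin m}
    (h : (Hmat q).Adj v w) :
    ∃ a b, q a b ≠ 0 ∧ ((v = Sum.inl a ∧ w = Sum.inr b) ∨ (v = Sum.inr b ∧ w = Sum.inl a)) := by
  rcases h with ⟨hne, h | h⟩
  · obtain ⟨a, b, h1, h2, h3⟩ := h; exact ⟨a, b, h1, Or.inl ⟨h2, h3⟩⟩
  · obtain ⟨a, b, h1, h2, h3⟩ := h; exact ⟨a, b, h1, Or.inr ⟨h3, h2⟩⟩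

/-- cut identity, component version -/
lemma cutA {m : ℕ} (x : Matrix (Fin m) (Fin m) ℝ) (P : Fin m ⊕ Fin m → Prop)
    [DecidablePred P]
    (hcl : ∀ a b, x a b ≠ 0 → (P (Sum.inl a) ↔ P (Sum.inr b))) :
    ∑ a, (if P (Sum.inl a) then (∑ b, x a b) else 0)
      = ∑ b, (if P (Sum.inr b) then (∑ a, x a b) else 0) := by
  have key : ∀ a b, (if P (Sum.inl a) then x a b else 0) = (if P (Sum.inr b) then x a b else 0) := by
    intro a b
    by_cases hx : x a b = 0
    · simp [hx]
    · simp only [hcl a b hx]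
  calc ∑ a, (if P (Sum.inl a) then (∑ b, x a b) else 0)
      = ∑ a, ∑ b, (if P (Sum.inl a) then x a b else 0) := by
        refine Finset.sum_congr rfl fun a _ => ?_
        by_cases h : P (Sum.inl a) <;> simp [h]
    _ = ∑ b, ∑ a, (if P (Sum.inr b) then x a b else 0) := by
        rw [Finset.sum_comm]
        exact Finset.sum_congr rfl fun b _ => Finset.sum_congr rfl fun a _ => key a b
    _ = ∑ b, (if P (Sum.inr b) then (∑ a, x a b) else 0) := by
        refine Finset.sum_congr rfl fun b _ => ?_
        by_cases h : P (Sum.inr b) <;> simp [h]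

/-- cut identity, bridge version -/
lemma cutB {m : ℕ} (x : Matrix (Fin m) (Fin m) ℝ) (P : Fin m ⊕ Fin m → Prop)
    [DecidablePred P]
    (a₀ b₀ : Fin m) (ha₀ : P (Sum.inl a₀)) (hb₀ : ¬ P (Sum.inr b₀))
    (hcl : ∀ a b, x a b ≠ 0 → ¬(a = a₀ ∧ b = b₀) → (P (Sum.inl a) ↔ P (Sum.inr b))) :
    (∑ a, (if P (Sum.inl a) then (∑ b, x a b) else 0))
      - (∑ b, (if P (Sum.inr b) then (∑ a, x a b) else 0)) = x a₀ b₀ := by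
  have key : ∀ a b, (if P (Sum.inl a) then x a b else 0) - (if P (Sum.inr b) then x a b else 0)
      = if a = a₀ ∧ b = b₀ then x a₀ b₀ else 0 := by
    intro a b
    by_cases he : a = a₀ ∧ b = b₀
    · obtain ⟨rfl, rfl⟩ := he; simp [ha₀, hb₀]
    · by_cases hx : x a b = 0
      · simp [hx, he]
      · simp only [hcl a b hx he, he, if_false]
        by_cases h : P (Sum.inr b) <;> simp [h]
  have lhs1 : ∑ a, (if P (Sum.inl a) then (∑ b, x a b) else 0)
      = ∑ a, ∑ b, (if P (Sum.inl a) then x a b else 0) := by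
    refine Finset.sum_congr rfl fun a _ => ?_
    by_cases h : P (Sum.inl a) <;> simp [h]
  have lhs2 : ∑ b, (if P (Sum.inr b) then (∑ a, x a b) else 0)
      = ∑ a, ∑ b, (if P (Sum.inr b) then x a b else 0) := by
    rw [Finset.sum_comm]
    refine Finset.sum_congr rfl fun b _ => ?_
    by_cases h : P (Sum.inr b) <;> simp [h]
  rw [lhs1, lhs2, ← Finset.sum_sub_distrib]
  simp_rw [← Finset.sum_sub_distrib, key]
  have h1 : ∀ a : Fin m, ∑ b, (if a = a₀ ∧ b = b₀ then x a₀ b₀ else 0)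
      = if a = a₀ then x a₀ b₀ else 0 := by
    intro a; by_cases h : a = a₀ <;> simp [h, Finset.sum_ite_eq']
  simp_rw [h1, Finset.sum_ite_eq']
  simp

lemma dart_count {V : Type*} [DecidableEq V] {G : SimpleGraph V} {v w : V} (c : G.Walk v w) (u : V) :
    ((c.darts.map (fun d => (if d.toProd.1 = u then (1:ℝ) else 0) - (if d.toProd.2 = u then 1 else 0))).sum)
      = (if v = u then 1 else 0) - (if w = u then 1 else 0) := by
  induction c with
  | nil => simp
  | cons h q ih =>
    rw [SimpleGraph.Walk.darts_cons, List.map_cons, List.sum_cons, ih]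
    ring

lemma dart_count' {V : Type*} [DecidableEq V] {G : SimpleGraph V} {v w : V} (c : G.Walk v w) (u : V) :
    ((c.darts.map (fun d => (if d.toProd.2 = u then (1:ℝ) else 0) - (if d.toProd.1 = u then 1 else 0))).sum)
      = (if w = u then 1 else 0) - (if v = u then 1 else 0) := by
  induction c with
  | nil => simp
  | cons h q ih =>
    rw [SimpleGraph.Walk.darts_cons, List.map_cons, List.sum_cons, ih]
    ring

lemma sum_list_swap {m : ℕ} {γ : Type*} (l : List γ) (f : γ → Fin m → ℝ) :
    ∑ b, (l.map (fun d => f d b)).sum = (l.map (fun d => ∑ b, f d b)).sum := by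
  induction l with
  | nil => simp
  | cons d l ih => simp [Finset.sum_add_distrib, ih]

lemma exists_dir_of_cycle {m : ℕ} (q : Matrix (Fin m) (Fin m) ℝ)
    (h : ¬ (Hmat q).IsAcyclic) :
    ∃ x : Matrix (Fin m) (Fin m) ℝ, x ≠ 0 ∧ (∀ a b, x a b ≠ 0 → q a b ≠ 0) ∧
      (∀ a, ∑ b, x a b = 0) ∧ (∀ b, ∑ a, x a b = 0) := by
  simp only [SimpleGraph.IsAcyclic, not_forall, not_not] at h
  obtain ⟨v, c, hc⟩ := h
  -- the alternating-sign matrix of the cycle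
  set term : (Hmat q).Dart → Fin m → Fin m → ℝ := fun d a b =>
    (if d.toProd = (Sum.inl a, Sum.inr b) then (1:ℝ) else 0)
      - (if d.toProd = (Sum.inr b, Sum.inl a) then 1 else 0) with hterm
  set x : Matrix (Fin m) (Fin m) ℝ := fun a b => (c.darts.map (fun d => term d a b)).sum with hx
  -- support
  have hsupp : ∀ a b, x a b ≠ 0 → q a b ≠ 0 := by
    intro a b hab
    by_contra hq
    apply hab
    rw [hx]
    apply List.sum_eq_zero
    intro r hr
    rw [List.mem_map] at hr
    obtain ⟨d, hd, rfl⟩ := hr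
    rw [hterm]
    have hadj := d.adj
    by_cases h1 : d.toProd = (Sum.inl a, Sum.inr b)
    · exfalso
      have h1a : d.toProd.1 = Sum.inl a := congrArg Prod.fst h1
      have h1b : d.toProd.2 = Sum.inr b := congrArg Prod.snd h1
      rw [h1a, h1b] at hadj
      exact (hmat_adj.mp hadj) hq
    · by_cases h2 : d.toProd = (Sum.inr b, Sum.inl a)
      · exfalso
        have h1a : d.toProd.1 = Sum.inr b := congrArg Prod.fst h2
        have h1b : d.toProd.2 = Sum.inl a := congrArg Prod.snd h2
        rw [h1a, h1b] at hadj
        exact (hmat_adj.mp hadj.symm) hq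
      · simp [h1, h2]
  -- per-dart row sum
  have hrowd : ∀ (d : (Hmat q).Dart) (a : Fin m), (∑ b, term d a b)
      = (if d.toProd.1 = Sum.inl a then (1:ℝ) else 0) - (if d.toProd.2 = Sum.inl a then 1 else 0) := by
    intro d a
    obtain ⟨a', b', hq', hcase⟩ := hmat_adj_cases d.adj
    rcases hcase with ⟨h1, h2⟩ | ⟨h1, h2⟩
    · have hp : d.toProd = (Sum.inl a', Sum.inr b') := Prod.ext h1 h2
      have hfst : d.toProd.1 = Sum.inl a' := congrArg Prod.fst hp
      have hsnd : d.toProd.2 = Sum.inr b' := congrArg Prod.snd hp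
      rw [hfst, hsnd]
      simp only [hterm, hp, Prod.mk.injEq]
      by_cases ha : a = a'
      · simp [ha, Prod.ext_iff]
      · have ha' : ¬ a' = a := fun h => ha h.symm
        simp [Prod.ext_iff, ha, ha']
    · have hp : d.toProd = (Sum.inr b', Sum.inl a') := Prod.ext h1 h2
      have hfst : d.toProd.1 = Sum.inr b' := congrArg Prod.fst hp
      have hsnd : d.toProd.2 = Sum.inl a' := congrArg Prod.snd hp
      rw [hfst, hsnd]
      simp only [hterm, hp, Prod.mk.injEq]
      by_cases ha : a = a'
      · simp [ha, Prod.ext_iff]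
      · have ha' : ¬ a' = a := fun h => ha h.symm
        simp [Prod.ext_iff, ha, ha']
  have hcold : ∀ (d : (Hmat q).Dart) (b : Fin m), (∑ a, term d a b)
      = (if d.snd = Sum.inr b then (1:ℝ) else 0) - (if d.fst = Sum.inr b then 1 else 0) := by
    intro d b
    obtain ⟨a', b', hq', hcase⟩ := hmat_adj_cases d.adj
    rcases hcase with ⟨h1, h2⟩ | ⟨h1, h2⟩
    · have hp : d.toProd = (Sum.inl a', Sum.inr b') := Prod.ext h1 h2
      have hfst : d.toProd.1 = Sum.inl a' := congrArg Prod.fst hp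
      have hsnd : d.toProd.2 = Sum.inr b' := congrArg Prod.snd hp
      rw [hfst, hsnd]
      simp only [hterm, hp, Prod.mk.injEq]
      by_cases hb : b = b'
      · simp [hb, Prod.ext_iff]
      · have hb' : ¬ b' = b := fun h => hb h.symm
        simp [Prod.ext_iff, hb, hb']
    · have hp : d.toProd = (Sum.inr b', Sum.inl a') := Prod.ext h1 h2
      have hfst : d.toProd.1 = Sum.inr b' := congrArg Prod.fst hp
      have hsnd : d.toProd.2 = Sum.inl a' := congrArg Prod.snd hp
      rw [hfst, hsnd]
      simp only [hterm, hp, Prod.mk.injEq]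
      by_cases hb : b = b'
      · simp [hb, Prod.ext_iff]
      · have hb' : ¬ b' = b := fun h => hb h.symm
        simp [Prod.ext_iff, hb, hb']
  -- row sums vanish
  have hrow : ∀ a, ∑ b, x a b = 0 := by
    intro a
    rw [hx]
    rw [sum_list_swap c.darts (fun d b => term d a b)]
    have : (c.darts.map (fun d => ∑ b, term d a b)).sum
        = (c.darts.map (fun d => (if d.toProd.1 = Sum.inl a then (1:ℝ) else 0)
            - (if d.toProd.2 = Sum.inl a then 1 else 0))).sum := by
      congr 1
      exact List.map_congr_left (fun d _ => hrowd d a)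
    rw [this, dart_count c (Sum.inl a)]
    ring
  have hcol : ∀ b, ∑ a, x a b = 0 := by
    intro b
    rw [hx]
    rw [sum_list_swap c.darts (fun d a => term d a b)]
    have : (c.darts.map (fun d => ∑ a, term d a b)).sum
        = (c.darts.map (fun d => ((if d.toProd.2 = Sum.inr b then (1:ℝ) else 0)
            - (if d.toProd.1 = Sum.inr b then 1 else 0)))).sum := by
      congr 1
      exact List.map_congr_left (fun d _ => hcold d b)
    rw [this, dart_count' c (Sum.inr b)]
    ring
  -- nonzero
  have hne : c.darts ≠ [] := by
    have h3 := hc.three_le_length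
    intro hnil
    rw [← SimpleGraph.Walk.length_darts, hnil] at h3
    simp at h3
  obtain ⟨d₀, l', hl⟩ := List.exists_cons_of_ne_nil hne
  have hnodup : (c.darts.map SimpleGraph.Dart.edge).Nodup := by
    have := hc.isCircuit.isTrail.edges_nodup
    rwa [SimpleGraph.Walk.edges] at this
  rw [hl, List.map_cons, List.nodup_cons] at hnodup
  have hd₀tail : ∀ d ∈ l', d.edge ≠ d₀.edge := by
    intro d hd he
    exact hnodup.1 (he ▸ List.mem_map_of_mem hd)
  have htail : ∀ a b, d₀.edge = s(Sum.inl a, Sum.inr b) →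
      ∀ d ∈ l', term d a b = 0 := by
    intro a b hedge d hd
    rw [hterm]
    by_cases h1 : d.toProd = (Sum.inl a, Sum.inr b)
    · exfalso
      apply hd₀tail d hd
      rw [hedge, SimpleGraph.Dart.edge, h1]
    · by_cases h2 : d.toProd = (Sum.inr b, Sum.inl a)
      · exfalso
        apply hd₀tail d hd
        rw [hedge, SimpleGraph.Dart.edge, h2, Sym2.eq_swap]
      · simp [h1, h2]
  have hx0 : ∃ a b, x a b ≠ 0 := by
    obtain ⟨a', b', hq', hcase⟩ := hmat_adj_cases d₀.adj
    rcases hcase with ⟨h1, h2⟩ | ⟨h1, h2⟩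
    · have hp : d₀.toProd = (Sum.inl a', Sum.inr b') := Prod.ext h1 h2
      refine ⟨a', b', ?_⟩
      have hedge : d₀.edge = s(Sum.inl a', Sum.inr b') := by
        rw [SimpleGraph.Dart.edge, hp]
      rw [hx, hl]
      simp only [List.map_cons, List.sum_cons]
      rw [List.sum_eq_zero (fun r hr => by
        rw [List.mem_map] at hr
        obtain ⟨d, hd, rfl⟩ := hr
        exact htail a' b' hedge d hd)]
      rw [hterm]
      simp [hp, Prod.ext_iff]
    · have hp : d₀.toProd = (Sum.inr b', Sum.inl a') := Prod.ext h1 h2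
      refine ⟨a', b', ?_⟩
      have hedge : d₀.edge = s(Sum.inl a', Sum.inr b') := by
        rw [SimpleGraph.Dart.edge, hp, Sym2.eq_swap]
      rw [hx, hl]
      simp only [List.map_cons, List.sum_cons]
      rw [List.sum_eq_zero (fun r hr => by
        rw [List.mem_map] at hr
        obtain ⟨d, hd, rfl⟩ := hr
        exact htail a' b' hedge d hd)]
      rw [hterm]
      simp [hp, Prod.ext_iff]
  obtain ⟨a, b, hab⟩ := hx0
  exact ⟨x, fun h0 => hab (by rw [h0]; rfl), hsupp, hrow, hcol⟩

lemma not_extreme_of_dir {n m : ℕ} (hn : 1 ≤ n) (hm : 2 ≤ m)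
    (p d : Fin n → Matrix (Fin m) (Fin m) ℝ) (hp : p ∈ DipoleDist n m)
    (hd : d ≠ 0)
    (hsupp : ∀ i a b, p i a b = 0 → d i a b = 0)
    (hrow : ∀ i j a, ∑ b, d i a b = ∑ b, d j a b)
    (hcol : ∀ i j b, ∑ a, d i a b = ∑ a, d j a b)
    (hsum : ∀ i, ∑ a, ∑ b, d i a b = 0) :
    p ∉ Set.extremePoints ℝ (DipoleDist n m) := by
  obtain ⟨hpos, hone, hr, hc⟩ := hp
  intro hext
  rw [mem_extremePoints] at hext
  -- choose ε
  have hne : (Finset.univ : Finset (Fin n × Fin m × Fin m)).Nonempty := by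
    refine ⟨⟨⟨0, hn⟩, ⟨0, by omega⟩, ⟨0, by omega⟩⟩, Finset.mem_univ _⟩
  set f : Fin n × Fin m × Fin m → ℝ := fun t =>
    if d t.1 t.2.1 t.2.2 = 0 then 1 else p t.1 t.2.1 t.2.2 / |d t.1 t.2.1 t.2.2| with hf
  set ε : ℝ := Finset.univ.inf' hne f with hε
  have hfpos : ∀ t, 0 < f t := by
    intro t
    rw [hf]
    by_cases h : d t.1 t.2.1 t.2.2 = 0
    · simp [h]
    · simp only [h, if_false]
      have hp0 : 0 < p t.1 t.2.1 t.2.2 := by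
        rcases lt_or_eq_of_le (hpos t.1 t.2.1 t.2.2) with h' | h'
        · exact h'
        · exact absurd (hsupp _ _ _ h'.symm) h
      exact div_pos hp0 (abs_pos.mpr h)
  have hεpos : 0 < ε := by
    rw [hε, Finset.lt_inf'_iff]
    exact fun t _ => hfpos t
  have hbound : ∀ i a b, ε * |d i a b| ≤ p i a b := by
    intro i a b
    by_cases h : d i a b = 0
    · simp [h, hpos i a b]
    · have h1 : ε ≤ f (i, a, b) := Finset.inf'_le _ (Finset.mem_univ _)
      rw [hf] at h1
      simp only [h, if_false] at h1
      calc ε * |d i a b| ≤ (p i a b / |d i a b|) * |d i a b| := by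
            exact mul_le_mul_of_nonneg_right h1 (abs_nonneg _)
        _ = p i a b := div_mul_cancel₀ _ (by positivity)
  -- the two perturbed points
  have hmem : ∀ s : ℝ, |s| = 1 → p + (s * ε) • d ∈ DipoleDist n m := by
    intro s hs
    refine ⟨?_, ?_, ?_, ?_⟩
    · intro i a b
      have : |s * ε * d i a b| ≤ p i a b := by
        rw [abs_mul, abs_mul, hs, one_mul, abs_of_pos hεpos]; exact hbound i a b
      have h2 := neg_abs_le (s * ε * d i a b)
      simp only [Pi.add_apply, Pi.smul_apply, Matrix.add_apply, Matrix.smul_apply, smul_eq_mul]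
      nlinarith [abs_nonneg (s * ε * d i a b)]
    · intro i
      simp only [Pi.add_apply, Pi.smul_apply, Matrix.add_apply, Matrix.smul_apply, smul_eq_mul]
      simp only [Finset.sum_add_distrib, ← Finset.mul_sum]
      rw [hone i, hsum i]
      ring
    · intro i j a
      simp only [Pi.add_apply, Pi.smul_apply, Matrix.add_apply, Matrix.smul_apply, smul_eq_mul]
      simp only [Finset.sum_add_distrib, ← Finset.mul_sum]
      rw [hr i j a, hrow i j a]
    · intro i j b
      simp only [Pi.add_apply, Pi.smul_apply, Matrix.add_apply, Matrix.smul_apply, smul_eq_mul]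
      simp only [Finset.sum_add_distrib, ← Finset.mul_sum]
      rw [hc i j b, hcol i j b]
  have h1 : p + ε • d ∈ DipoleDist n m := by simpa using hmem 1 (by norm_num)
  have h2 : p + (-ε) • d ∈ DipoleDist n m := by
    have := hmem (-1) (by norm_num); simpa using this
  have hseg : p ∈ openSegment ℝ (p + ε • d) (p + (-ε) • d) := by
    refine ⟨1/2, 1/2, by norm_num, by norm_num, by norm_num, ?_⟩
    module
  have := (hext.2 _ h1 _ h2 hseg).1
  apply hd
  have hεd : ε • d = 0 := by
    have : p + ε • d = p := this
    simpa using this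
  funext i
  have := congrFun hεd i
  simpa [hεpos.ne'] using this

set_option maxHeartbeats 1000000 in
lemma laplacian_surj {m : ℕ} (q : Matrix (Fin m) (Fin m) ℝ) (hq : ∀ a b, 0 ≤ q a b)
    (α β : Fin m → ℝ)
    (hK : ∀ v, (∑ a, if (Hmat q).Reachable v (Sum.inl a) then α a else 0)
           = (∑ b, if (Hmat q).Reachable v (Sum.inr b) then β b else 0)) :
    ∃ f g : Fin m → ℝ, (∀ a, ∑ b, q a b * (f a + g b) = α a) ∧
      (∀ b, ∑ a, q a b * (f a + g b) = β b) := by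
  set T : EuclideanSpace ℝ (Fin m ⊕ Fin m) →ₗ[ℝ] EuclideanSpace ℝ (Fin m ⊕ Fin m) :=
    { toFun := fun h => WithLp.toLp 2 (fun v => Sum.elim
        (fun a => ∑ b, q a b * (h (Sum.inl a) + h (Sum.inr b)))
        (fun b => ∑ a, q a b * (h (Sum.inl a) + h (Sum.inr b))) v : Fin m ⊕ Fin m → ℝ)
      map_add' := by
        intro h h'
        ext v
        cases v with
        | inl a =>
          show ∑ b, q a b * ((h + h') (Sum.inl a) + (h + h') (Sum.inr b)) = _
          have : ∀ b, q a b * ((h + h') (Sum.inl a) + (h + h') (Sum.inr b))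
              = q a b * (h (Sum.inl a) + h (Sum.inr b))
                + q a b * (h' (Sum.inl a) + h' (Sum.inr b)) := by
            intro b
            have e1 : (h + h') (Sum.inl a) = h (Sum.inl a) + h' (Sum.inl a) := rfl
            have e2 : (h + h') (Sum.inr b) = h (Sum.inr b) + h' (Sum.inr b) := rfl
            rw [e1, e2]; ring
          rw [Finset.sum_congr rfl (fun b _ => this b), Finset.sum_add_distrib]
          rfl
        | inr b =>
          show ∑ a, q a b * ((h + h') (Sum.inl a) + (h + h') (Sum.inr b)) = _
          have : ∀ a, q a b * ((h + h') (Sum.inl a) + (h + h') (Sum.inr b))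
              = q a b * (h (Sum.inl a) + h (Sum.inr b))
                + q a b * (h' (Sum.inl a) + h' (Sum.inr b)) := by
            intro a
            have e1 : (h + h') (Sum.inl a) = h (Sum.inl a) + h' (Sum.inl a) := rfl
            have e2 : (h + h') (Sum.inr b) = h (Sum.inr b) + h' (Sum.inr b) := rfl
            rw [e1, e2]; ring
          rw [Finset.sum_congr rfl (fun a _ => this a), Finset.sum_add_distrib]
          rfl
      map_smul' := by
        intro c h
        ext v
        cases v with
        | inl a =>
          show ∑ b, q a b * ((c • h) (Sum.inl a) + (c • h) (Sum.inr b)) = _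
          have : ∀ b, q a b * ((c • h) (Sum.inl a) + (c • h) (Sum.inr b))
              = c * (q a b * (h (Sum.inl a) + h (Sum.inr b))) := by
            intro b
            have e1 : (c • h) (Sum.inl a) = c * h (Sum.inl a) := rfl
            have e2 : (c • h) (Sum.inr b) = c * h (Sum.inr b) := rfl
            rw [e1, e2]; ring
          rw [Finset.sum_congr rfl (fun b _ => this b), ← Finset.mul_sum]
          rfl
        | inr b =>
          show ∑ a, q a b * ((c • h) (Sum.inl a) + (c • h) (Sum.inr b)) = _
          have : ∀ a, q a b * ((c • h) (Sum.inl a) + (c • h) (Sum.inr b))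
              = c * (q a b * (h (Sum.inl a) + h (Sum.inr b))) := by
            intro a
            have e1 : (c • h) (Sum.inl a) = c * h (Sum.inl a) := rfl
            have e2 : (c • h) (Sum.inr b) = c * h (Sum.inr b) := rfl
            rw [e1, e2]; ring
          rw [Finset.sum_congr rfl (fun a _ => this a), ← Finset.mul_sum]
          rfl } with hT
  have hTapp_l : ∀ (h : EuclideanSpace ℝ (Fin m ⊕ Fin m)) (a : Fin m),
      T h (Sum.inl a) = ∑ b, q a b * (h (Sum.inl a) + h (Sum.inr b)) := fun h a => rfl
  have hTapp_r : ∀ (h : EuclideanSpace ℝ (Fin m ⊕ Fin m)) (b : Fin m),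
      T h (Sum.inr b) = ∑ a, q a b * (h (Sum.inl a) + h (Sum.inr b)) := fun h b => rfl
  -- inner product formula
  have hinner : ∀ x y : EuclideanSpace ℝ (Fin m ⊕ Fin m), ⟪x, y⟫ = ∑ v, x v * y v := by
    intro x y
    rw [PiLp.inner_apply]
    simp [RCLike.inner_apply, mul_comm]
  have hTinner : ∀ h h' : EuclideanSpace ℝ (Fin m ⊕ Fin m), ⟪T h, h'⟫
      = ∑ a, ∑ b, q a b * (h (Sum.inl a) + h (Sum.inr b)) * (h' (Sum.inl a) + h' (Sum.inr b)) := by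
    intro h h'
    rw [hinner, Fintype.sum_sum_type]
    have e1 : ∀ a, T h (Sum.inl a) * h' (Sum.inl a)
        = ∑ b, q a b * (h (Sum.inl a) + h (Sum.inr b)) * h' (Sum.inl a) := by
      intro a; rw [hTapp_l, Finset.sum_mul]
    have e2 : ∀ b, T h (Sum.inr b) * h' (Sum.inr b)
        = ∑ a, q a b * (h (Sum.inl a) + h (Sum.inr b)) * h' (Sum.inr b) := by
      intro b; rw [hTapp_r, Finset.sum_mul]
    rw [Finset.sum_congr rfl (fun a _ => e1 a), Finset.sum_congr rfl (fun b _ => e2 b)]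
    have e3 : ∑ b, ∑ a, q a b * (h (Sum.inl a) + h (Sum.inr b)) * h' (Sum.inr b)
        = ∑ a, ∑ b, q a b * (h (Sum.inl a) + h (Sum.inr b)) * h' (Sum.inr b) :=
      Finset.sum_comm
    rw [e3, ← Finset.sum_add_distrib]
    refine Finset.sum_congr rfl fun a _ => ?_
    rw [← Finset.sum_add_distrib]
    refine Finset.sum_congr rfl fun b _ => ?_
    ring
  -- symmetric, so range T ≤ (ker T)ᗮ
  have hrange_le : LinearMap.range T ≤ (LinearMap.ker T)ᗮ := by
    rintro y ⟨h, rfl⟩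
    rw [Submodule.mem_orthogonal]
    intro k hk
    rw [LinearMap.mem_ker] at hk
    have e1 : ⟪k, T h⟫ = ⟪T k, h⟫ := by
      rw [real_inner_comm, hTinner, hTinner]
      refine Finset.sum_congr rfl fun a _ => Finset.sum_congr rfl fun b _ => by ring
    rw [e1, hk]
    simp [hinner]
  have hrange_eq : LinearMap.range T = (LinearMap.ker T)ᗮ := by
    apply Submodule.eq_of_le_of_finrank_eq hrange_le
    have h1 := LinearMap.finrank_range_add_finrank_ker T
    have h2 := Submodule.finrank_add_finrank_orthogonal (K := LinearMap.ker T)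
    omega
  -- the target vector
  set ψ : EuclideanSpace ℝ (Fin m ⊕ Fin m) := WithLp.toLp 2 (fun v => Sum.elim α β v : Fin m ⊕ Fin m → ℝ) with hψ
  have hψmem : ψ ∈ (LinearMap.ker T)ᗮ := by
    rw [Submodule.mem_orthogonal]
    intro h hk
    rw [LinearMap.mem_ker] at hk
    -- edge relation
    have hedge : ∀ a b, q a b ≠ 0 → h (Sum.inl a) + h (Sum.inr b) = 0 := by
      intro a b hab
      have h0 : (0:ℝ) = ∑ a, ∑ b, q a b * (h (Sum.inl a) + h (Sum.inr b))
          * (h (Sum.inl a) + h (Sum.inr b)) := by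
        rw [← hTinner, hk]
        simp [hinner]
      have hnn : ∀ a b, 0 ≤ q a b * (h (Sum.inl a) + h (Sum.inr b))
          * (h (Sum.inl a) + h (Sum.inr b)) := by
        intro a b
        rw [mul_assoc]
        exact mul_nonneg (hq a b) (mul_self_nonneg _)
      have hz : ∀ a ∈ Finset.univ, ∀ b ∈ Finset.univ,
          q a b * (h (Sum.inl a) + h (Sum.inr b)) * (h (Sum.inl a) + h (Sum.inr b)) = 0 := by
        have houter := (Finset.sum_eq_zero_iff_of_nonneg
          (fun a _ => Finset.sum_nonneg (fun b _ => hnn a b))).mp h0.symm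
        intro a ha b hb
        exact (Finset.sum_eq_zero_iff_of_nonneg (fun b _ => hnn a b)).mp (houter a ha) b hb
      have := hz a (Finset.mem_univ a) b (Finset.mem_univ b)
      rw [mul_assoc] at this
      rcases mul_eq_zero.mp this with h' | h'
      · exact absurd h' hab
      · exact (mul_self_eq_zero).mp h'
    -- the signed potential
    set ht : (Fin m ⊕ Fin m) → ℝ :=
      Sum.elim (fun a => h (Sum.inl a)) (fun b => - h (Sum.inr b)) with hht
    have hconst : ∀ u v' : Fin m ⊕ Fin m, (Hmat q).Reachable u v' → ht u = ht v' := by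
      intro u v' hr
      obtain ⟨w⟩ := hr
      induction w with
      | nil => rfl
      | cons hadj w ih =>
        refine Eq.trans ?_ ih
        obtain ⟨a, b, hab, hcase⟩ := hmat_adj_cases hadj
        rcases hcase with ⟨rfl, rfl⟩ | ⟨rfl, rfl⟩
        · show h (Sum.inl a) = - h (Sum.inr b)
          have := hedge a b hab; linarith
        · show - h (Sum.inr b) = h (Sum.inl a)
          have := hedge a b hab; linarith
    -- component sizes
    set cs : (Fin m ⊕ Fin m) → ℝ :=
      fun v => ∑ u, if (Hmat q).Reachable v u then (1:ℝ) else 0 with hcs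
    have hcs_pos : ∀ v, 0 < cs v := by
      intro v
      rw [hcs]
      apply Finset.sum_pos' (fun u _ => by positivity)
      exact ⟨v, Finset.mem_univ v, by simp [SimpleGraph.Reachable.refl]⟩
    have hcs_congr : ∀ u v' : Fin m ⊕ Fin m, (Hmat q).Reachable u v' → cs u = cs v' := by
      intro u v' hr
      rw [hcs]
      refine Finset.sum_congr rfl fun w _ => ?_
      have : (Hmat q).Reachable u w ↔ (Hmat q).Reachable v' w :=
        ⟨fun h' => hr.symm.trans h', fun h' => hr.trans h'⟩
      rw [if_congr this rfl rfl]
    -- averaging identity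
    have key : ∀ w : Fin m ⊕ Fin m,
        (∑ v, if (Hmat q).Reachable v w then ht v / cs v else 0) = ht w := by
      intro w
      have e1 : ∀ v, (if (Hmat q).Reachable v w then ht v / cs v else 0)
          = (if (Hmat q).Reachable w v then ht w / cs w else 0) := by
        intro v
        by_cases hr : (Hmat q).Reachable v w
        · rw [if_pos hr, if_pos hr.symm, hconst v w hr, hcs_congr v w hr]
        · rw [if_neg hr, if_neg (fun h' => hr h'.symm)]
      rw [Finset.sum_congr rfl (fun v _ => e1 v)]
      have e2 : ∀ v, (if (Hmat q).Reachable w v then ht w / cs w else 0)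
          = (ht w / cs w) * (if (Hmat q).Reachable w v then (1:ℝ) else 0) := by
        intro v; by_cases hr : (Hmat q).Reachable w v <;> simp [hr]
      rw [Finset.sum_congr rfl (fun v _ => e2 v), ← Finset.mul_sum]
      exact div_mul_cancel₀ _ (hcs_pos w).ne'
    -- compute the pairing
    have hpair : ⟪h, ψ⟫ = ∑ a, ht (Sum.inl a) * α a - ∑ b, ht (Sum.inr b) * β b := by
      rw [hinner, Fintype.sum_sum_type]
      have el : ∀ a, h (Sum.inl a) * ψ (Sum.inl a) = ht (Sum.inl a) * α a := fun a => rfl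
      have er : ∀ b, h (Sum.inr b) * ψ (Sum.inr b) = - (ht (Sum.inr b) * β b) := by
        intro b
        show h (Sum.inr b) * β b = - (- h (Sum.inr b) * β b)
        ring
      rw [Finset.sum_congr rfl (fun a _ => el a), Finset.sum_congr rfl (fun b _ => er b)]
      rw [Finset.sum_neg_distrib]
      ring
    rw [real_inner_comm] at hpair ⊢
    rw [hpair]
    -- substitute the averaging identity and swap sums
    have swapl : ∑ a, ht (Sum.inl a) * α a
        = ∑ v, (ht v / cs v) * (∑ a, if (Hmat q).Reachable v (Sum.inl a) then α a else 0) := by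
      have e1 : ∀ a, ht (Sum.inl a) * α a
          = ∑ v, (if (Hmat q).Reachable v (Sum.inl a) then (ht v / cs v) * α a else 0) := by
        intro a
        rw [← key (Sum.inl a), Finset.sum_mul]
        refine Finset.sum_congr rfl fun v _ => ?_
        by_cases hr : (Hmat q).Reachable v (Sum.inl a) <;> simp [hr]
      rw [Finset.sum_congr rfl (fun a _ => e1 a), Finset.sum_comm]
      refine Finset.sum_congr rfl fun v _ => ?_
      rw [Finset.mul_sum]
      refine Finset.sum_congr rfl fun a _ => ?_
      by_cases hr : (Hmat q).Reachable v (Sum.inl a) <;> simp [hr]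
    have swapr : ∑ b, ht (Sum.inr b) * β b
        = ∑ v, (ht v / cs v) * (∑ b, if (Hmat q).Reachable v (Sum.inr b) then β b else 0) := by
      have e1 : ∀ b, ht (Sum.inr b) * β b
          = ∑ v, (if (Hmat q).Reachable v (Sum.inr b) then (ht v / cs v) * β b else 0) := by
        intro b
        rw [← key (Sum.inr b), Finset.sum_mul]
        refine Finset.sum_congr rfl fun v _ => ?_
        by_cases hr : (Hmat q).Reachable v (Sum.inr b) <;> simp [hr]
      rw [Finset.sum_congr rfl (fun b _ => e1 b), Finset.sum_comm]
      refine Finset.sum_congr rfl fun v _ => ?_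
      rw [Finset.mul_sum]
      refine Finset.sum_congr rfl fun b _ => ?_
      by_cases hr : (Hmat q).Reachable v (Sum.inr b) <;> simp [hr]
    rw [swapl, swapr, ← Finset.sum_sub_distrib]
    apply Finset.sum_eq_zero
    intro v _
    rw [← mul_sub, hK v]
    ring
  rw [← hrange_eq] at hψmem
  obtain ⟨h, hh⟩ := hψmem
  have h1 : ∀ v, T h v = ψ v := by
    intro v; rw [hh]
  refine ⟨fun a => h (Sum.inl a), fun b => h (Sum.inr b), ?_, ?_⟩
  · intro a
    have h2 := h1 (Sum.inl a)
    rw [hTapp_l h a] at h2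
    exact h2
  · intro b
    have h2 := h1 (Sum.inr b)
    rw [hTapp_r h b] at h2
    exact h2


lemma sum_ite_smul {ι : Type*} [Fintype ι] (P : ι → Prop) [DecidablePred P] (f : ι → ℝ) (c : ℝ) :
    ∑ x, (if P x then c * f x else 0) = c * ∑ x, (if P x then f x else 0) := by
  rw [Finset.mul_sum]
  refine Finset.sum_congr rfl fun x _ => ?_
  by_cases h : P x <;> simp [h]

lemma sum_ite_sub {ι : Type*} [Fintype ι] (P : ι → Prop) [DecidablePred P] (f g : ι → ℝ) :
    ∑ x, (if P x then f x - g x else 0)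
      = (∑ x, if P x then f x else 0) - ∑ x, (if P x then g x else 0) := by
  rw [← Finset.sum_sub_distrib]
  refine Finset.sum_congr rfl fun x _ => ?_
  by_cases h : P x <;> simp [h]

set_option maxHeartbeats 1000000 in
open scoped Classical in
/-- Graph-theoretic characterization of the vertices of the dipole polytope:
`p` is extreme iff every support graph `H_i` is acyclic and the subspace `K`
of pairs `(α, β)` whose sums match on every connected component of every `H_i`
is one-dimensional (i.e. `K` is the set of multiples of a single nonzero
vector; equivalently `rank Q(H₁, …, Hₙ) = 2m - 1`). -/
theorem stmt_17 {n m : ℕ} (hn : 1 ≤ n) (hm : 2 ≤ m)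
    (p : Fin n → Matrix (Fin m) (Fin m) ℝ) (hp : p ∈ DipoleDist n m) :
    p ∈ Set.extremePoints ℝ (DipoleDist n m) ↔
      (∀ i, (Hmat (p i)).IsAcyclic) ∧
      ∃ z : (Fin m → ℝ) × (Fin m → ℝ), z ≠ 0 ∧
        {q : (Fin m → ℝ) × (Fin m → ℝ) | ∀ (i : Fin n) (v : Fin m ⊕ Fin m),
          (∑ a : Fin m, if (Hmat (p i)).Reachable v (Sum.inl a) then q.1 a else 0) =
          (∑ b : Fin m, if (Hmat (p i)).Reachable v (Sum.inr b) then q.2 b else 0)} =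
        Set.range (fun c : ℝ => c • z) := by
  obtain ⟨hpos, hone, hr, hc⟩ := hp
  have hp' : p ∈ DipoleDist n m := ⟨hpos, hone, hr, hc⟩
  set i₀ : Fin n := ⟨0, hn⟩ with hi₀
  set Kset : Set ((Fin m → ℝ) × (Fin m → ℝ)) :=
    {q : (Fin m → ℝ) × (Fin m → ℝ) | ∀ (i : Fin n) (v : Fin m ⊕ Fin m),
      (∑ a : Fin m, if (Hmat (p i)).Reachable v (Sum.inl a) then q.1 a else 0) =
      (∑ b : Fin m, if (Hmat (p i)).Reachable v (Sum.inr b) then q.2 b else 0)} with hKset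
  set z₀ : (Fin m → ℝ) × (Fin m → ℝ) :=
    (fun a => ∑ b, p i₀ a b, fun b => ∑ a, p i₀ a b) with hz₀
  -- z₀ is nonzero
  have hz₀sum : ∑ a, z₀.1 a = 1 := by rw [hz₀]; exact hone i₀
  have hz₀ne : z₀ ≠ 0 := by
    intro h0
    rw [h0] at hz₀sum
    simp at hz₀sum
  -- generic component identity
  have hcomp : ∀ (i : Fin n) (x : Matrix (Fin m) (Fin m) ℝ),
      (∀ a b, x a b ≠ 0 → p i a b ≠ 0) → ∀ v : Fin m ⊕ Fin m,
      (∑ a, if (Hmat (p i)).Reachable v (Sum.inl a) then (∑ b, x a b) else 0)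
        = ∑ b, if (Hmat (p i)).Reachable v (Sum.inr b) then (∑ a, x a b) else 0 := by
    intro i x hsupp v
    apply cutA x (fun u => (Hmat (p i)).Reachable v u)
    intro a b hx
    have hadj : (Hmat (p i)).Adj (Sum.inl a) (Sum.inr b) := hmat_adj.mpr (hsupp a b hx)
    exact ⟨fun h => h.trans hadj.reachable, fun h => h.trans hadj.symm.reachable⟩
  -- z₀ ∈ Kset
  have hz₀K : z₀ ∈ Kset := by
    rw [hKset]
    intro i v
    have := hcomp i (p i) (fun a b h => h) v
    have e1 : ∀ a, z₀.1 a = ∑ b, p i a b := fun a => hr i₀ i a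
    have e2 : ∀ b, z₀.2 b = ∑ a, p i a b := fun b => hc i₀ i b
    calc (∑ a, if (Hmat (p i)).Reachable v (Sum.inl a) then z₀.1 a else 0)
        = ∑ a, if (Hmat (p i)).Reachable v (Sum.inl a) then (∑ b, p i a b) else 0 := by
          refine Finset.sum_congr rfl fun a _ => ?_
          rw [e1 a]
      _ = ∑ b, if (Hmat (p i)).Reachable v (Sum.inr b) then (∑ a, p i a b) else 0 := this
      _ = ∑ b, if (Hmat (p i)).Reachable v (Sum.inr b) then z₀.2 b else 0 := by
          refine Finset.sum_congr rfl fun b _ => ?_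
          rw [e2 b]
  -- Kset is closed under smul
  have hKsmul : ∀ (c : ℝ) (q : (Fin m → ℝ) × (Fin m → ℝ)), q ∈ Kset → c • q ∈ Kset := by
    intro c q hq i v
    have hq' := hq i v
    have e1 : ∀ a, (c • q).1 a = c * q.1 a := fun a => rfl
    have e2 : ∀ b, (c • q).2 b = c * q.2 b := fun b => rfl
    calc (∑ a, if (Hmat (p i)).Reachable v (Sum.inl a) then (c • q).1 a else 0)
        = ∑ a, if (Hmat (p i)).Reachable v (Sum.inl a) then c * q.1 a else 0 := by
          refine Finset.sum_congr rfl fun a _ => ?_; rw [e1 a]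
      _ = c * ∑ a, if (Hmat (p i)).Reachable v (Sum.inl a) then q.1 a else 0 :=
          sum_ite_smul _ _ _
      _ = c * ∑ b, if (Hmat (p i)).Reachable v (Sum.inr b) then q.2 b else 0 := by rw [hq']
      _ = ∑ b, if (Hmat (p i)).Reachable v (Sum.inr b) then c * q.2 b else 0 :=
          (sum_ite_smul _ _ _).symm
      _ = ∑ b, if (Hmat (p i)).Reachable v (Sum.inr b) then (c • q).2 b else 0 := by
          refine Finset.sum_congr rfl fun b _ => ?_; rw [e2 b]
  -- Kset is closed under subtraction
  have hKsub : ∀ (q r : (Fin m → ℝ) × (Fin m → ℝ)), q ∈ Kset → r ∈ Kset → q - r ∈ Kset := by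
    intro q r hq hr' i v
    have e1 : ∀ a, (q - r).1 a = q.1 a - r.1 a := fun a => rfl
    have e2 : ∀ b, (q - r).2 b = q.2 b - r.2 b := fun b => rfl
    calc (∑ a, if (Hmat (p i)).Reachable v (Sum.inl a) then (q - r).1 a else 0)
        = ∑ a, if (Hmat (p i)).Reachable v (Sum.inl a) then q.1 a - r.1 a else 0 := by
          refine Finset.sum_congr rfl fun a _ => ?_; rw [e1 a]
      _ = (∑ a, if (Hmat (p i)).Reachable v (Sum.inl a) then q.1 a else 0)
            - ∑ a, if (Hmat (p i)).Reachable v (Sum.inl a) then r.1 a else 0 :=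
          sum_ite_sub _ _ _
      _ = (∑ b, if (Hmat (p i)).Reachable v (Sum.inr b) then q.2 b else 0)
            - ∑ b, if (Hmat (p i)).Reachable v (Sum.inr b) then r.2 b else 0 := by
          rw [hq i v, hr' i v]
      _ = ∑ b, if (Hmat (p i)).Reachable v (Sum.inr b) then q.2 b - r.2 b else 0 :=
          (sum_ite_sub _ _ _).symm
      _ = ∑ b, if (Hmat (p i)).Reachable v (Sum.inr b) then (q - r).2 b else 0 := by
          refine Finset.sum_congr rfl fun b _ => ?_; rw [e2 b]
  constructor
  · -- extreme point → acyclic + 1-dimensional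
    intro hext
    constructor
    · -- acyclicity
      intro i
      by_contra hcyc
      obtain ⟨x, hxne, hxsupp, hxrow, hxcol⟩ := exists_dir_of_cycle (p i) hcyc
      set d : Fin n → Matrix (Fin m) (Fin m) ℝ := fun j => if j = i then x else 0 with hd
      refine not_extreme_of_dir hn hm p d hp' ?_ ?_ ?_ ?_ ?_ hext
      · intro h0
        apply hxne
        have := congrFun h0 i
        simpa [hd] using this
      · intro j a b hpj
        rw [hd]
        by_cases hj : j = i
        · subst hj
          simp only [if_pos rfl]
          by_contra hxab
          exact hxsupp a b hxab hpj
        · simp [hj]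
      · intro j j' a
        rw [hd]
        by_cases hj : j = i <;> by_cases hj' : j' = i <;>
          simp [hj, hj', hxrow a]
      · intro j j' b
        rw [hd]
        by_cases hj : j = i <;> by_cases hj' : j' = i <;>
          simp [hj, hj', hxcol b]
      · intro j
        rw [hd]
        by_cases hj : j = i <;> simp [hj, hxrow]
    · -- the subspace is spanned by z₀
      refine ⟨z₀, hz₀ne, ?_⟩
      apply Set.eq_of_subset_of_subset
      · -- Kset ⊆ range
        intro q hq
        set s : ℝ := ∑ a, q.1 a with hs
        set q' : (Fin m → ℝ) × (Fin m → ℝ) := q - s • z₀ with hq'def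
        have hq'K : q' ∈ Kset := hKsub q (s • z₀) hq (hKsmul s z₀ hz₀K)
        have hq'0 : q' = 0 := by
          by_contra hq'ne
          -- build a perturbation direction from q'
          have hchoice : ∀ i : Fin n, ∃ f g : Fin m → ℝ,
              (∀ a, ∑ b, p i a b * (f a + g b) = q'.1 a) ∧
              (∀ b, ∑ a, p i a b * (f a + g b) = q'.2 b) := by
            intro i
            exact laplacian_surj (p i) (hpos i) q'.1 q'.2 (fun v => hq'K i v)
          choose f g hf hg using hchoice
          set d : Fin n → Matrix (Fin m) (Fin m) ℝ :=
            fun j a b => p j a b * (f j a + g j b) with hd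
          have hdrow : ∀ j a, ∑ b, d j a b = q'.1 a := fun j a => hf j a
          have hdcol : ∀ j b, ∑ a, d j a b = q'.2 b := fun j b => hg j b
          have hq'sum : ∑ a, q'.1 a = 0 := by
            have e1 : ∀ a, q'.1 a = q.1 a - s * z₀.1 a := fun a => rfl
            rw [Finset.sum_congr rfl (fun a _ => e1 a), Finset.sum_sub_distrib,
              ← Finset.mul_sum, hz₀sum, ← hs]
            ring
          refine absurd hext (not_extreme_of_dir hn hm p d hp' ?_ ?_ ?_ ?_ ?_)
          · intro h0
            apply hq'ne
            have h1 : q'.1 = 0 := by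
              funext a
              rw [← hdrow i₀ a]
              simp [congrFun h0 i₀]
            have h2 : q'.2 = 0 := by
              funext b
              rw [← hdcol i₀ b]
              simp [congrFun h0 i₀]
            exact Prod.ext h1 h2
          · intro j a b hpj
            rw [hd]
            simp [hpj]
          · intro j j' a
            rw [hdrow j a, hdrow j' a]
          · intro j j' b
            rw [hdcol j b, hdcol j' b]
          · intro j
            rw [Finset.sum_congr rfl (fun a _ => hdrow j a)]
            exact hq'sum
        refine ⟨s, ?_⟩
        have : q - s • z₀ = 0 := hq'0
        have := sub_eq_zero.mp this
        exact this.symm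
      · -- range ⊆ Kset
        rintro q ⟨c, rfl⟩
        exact hKsmul c z₀ hz₀K
  · -- acyclic + 1-dimensional → extreme point
    rintro ⟨hac, z, hzne, hKeq⟩
    rw [mem_extremePoints]
    refine ⟨hp', ?_⟩
    intro x₁ hx₁ x₂ hx₂ hseg
    obtain ⟨t, t', ht, ht', htt, hcomb⟩ := hseg
    obtain ⟨h1pos, h1one, h1r, h1c⟩ := hx₁
    obtain ⟨h2pos, h2one, h2r, h2c⟩ := hx₂
    set d : Fin n → Matrix (Fin m) (Fin m) ℝ := fun j a b => x₁ j a b - x₂ j a b with hd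
    -- support of d is inside support of p
    have hentry : ∀ i a b, p i a b = t * x₁ i a b + t' * x₂ i a b := by
      intro i a b
      have := congrFun hcomb i
      have := congrFun (congrFun this a) b
      exact this.symm
    have hsupp : ∀ i a b, p i a b = 0 → x₁ i a b = 0 ∧ x₂ i a b = 0 := by
      intro i a b h0
      have he := hentry i a b
      rw [h0] at he
      constructor
      · nlinarith [h1pos i a b, h2pos i a b, mul_nonneg ht.le (h1pos i a b),
          mul_nonneg ht'.le (h2pos i a b)]
      · nlinarith [h1pos i a b, h2pos i a b, mul_nonneg ht.le (h1pos i a b),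
          mul_nonneg ht'.le (h2pos i a b)]
    have hdsupp : ∀ i a b, d i a b ≠ 0 → p i a b ≠ 0 := by
      intro i a b hne h0
      obtain ⟨e1, e2⟩ := hsupp i a b h0
      apply hne
      rw [hd]
      simp [e1, e2]
    -- row and column sums of d
    have hdrow : ∀ i j a, ∑ b, d i a b = ∑ b, d j a b := by
      intro i j a
      rw [hd]
      simp only [Finset.sum_sub_distrib]
      rw [h1r i j a, h2r i j a]
    have hdcol : ∀ i j b, ∑ a, d i a b = ∑ a, d j a b := by
      intro i j b
      rw [hd]
      simp only [Finset.sum_sub_distrib]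
      rw [h1c i j b, h2c i j b]
    set ρ : Fin m → ℝ := fun a => ∑ b, d i₀ a b with hρ
    set σ : Fin m → ℝ := fun b => ∑ a, d i₀ a b with hσ
    -- (ρ, σ) belongs to Kset
    have hqK : (ρ, σ) ∈ Kset := by
      intro i v
      have key := hcomp i (fun a b => d i a b) (fun a b h => hdsupp i a b h) v
      calc (∑ a, if (Hmat (p i)).Reachable v (Sum.inl a) then ρ a else 0)
          = ∑ a, if (Hmat (p i)).Reachable v (Sum.inl a) then (∑ b, d i a b) else 0 := by
            refine Finset.sum_congr rfl fun a _ => ?_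
            rw [hρ]
            simp only []
            rw [hdrow i₀ i a]
        _ = ∑ b, if (Hmat (p i)).Reachable v (Sum.inr b) then (∑ a, d i a b) else 0 := key
        _ = ∑ b, if (Hmat (p i)).Reachable v (Sum.inr b) then σ b else 0 := by
            refine Finset.sum_congr rfl fun b _ => ?_
            rw [hσ]
            simp only []
            rw [hdcol i₀ i b]
    -- deduce ρ = 0 and σ = 0
    have hρ0 : ρ = 0 ∧ σ = 0 := by
      have hz₀mem : z₀ ∈ Set.range (fun c : ℝ => c • z) := by rw [← hKeq]; exact hz₀K
      have hqmem : (ρ, σ) ∈ Set.range (fun c : ℝ => c • z) := by rw [← hKeq]; exact hqK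
      obtain ⟨c₀, hc₀⟩ := hz₀mem
      obtain ⟨c₁, hc₁⟩ := hqmem
      set S : ℝ := ∑ a, z.1 a with hS
      have hc₀S : c₀ * S = 1 := by
        rw [← hz₀sum, ← hc₀]
        rw [hS, Finset.mul_sum]
        rfl
      have hρsum : ∑ a, ρ a = 0 := by
        rw [hρ]
        simp only []
        rw [← Finset.sum_product']
        have e1 : ∀ i : Fin n, ∑ a, ∑ b, d i a b = 0 := by
          intro i
          rw [hd]
          simp only [Finset.sum_sub_distrib]
          rw [h1one i, h2one i]
          ring
        exact (Finset.sum_product _ _ _).trans (e1 i₀)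
      have hc₁S : c₁ * S = 0 := by
        rw [← hρsum]
        have h1 : c₁ • z.1 = ρ := by
          have := congrArg Prod.fst hc₁
          simpa using this
        have h2 : ρ = (fun a => c₁ * z.1 a) := by rw [← h1]; rfl
        rw [h2, hS, Finset.mul_sum]
      have hSne : S ≠ 0 := by
        intro h0
        rw [h0, mul_zero] at hc₀S
        norm_num at hc₀S
      have hc₁0 : c₁ = 0 := by
        rcases mul_eq_zero.mp hc₁S with h | h
        · exact h
        · exact absurd h hSne
      rw [hc₁0] at hc₁
      simp only [zero_smul] at hc₁
      constructor
      · exact congrArg Prod.fst hc₁.symm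
      · exact congrArg Prod.snd hc₁.symm
    have hρz : ∀ a, ∀ i : Fin n, ∑ b, d i a b = 0 := by
      intro a i
      rw [hdrow i i₀ a]
      have := congrFun hρ0.1 a
      exact this
    have hσz : ∀ b, ∀ i : Fin n, ∑ a, d i a b = 0 := by
      intro b i
      rw [hdcol i i₀ b]
      have := congrFun hρ0.2 b
      exact this
    -- acyclicity forces d = 0
    have hd0 : ∀ i a b, d i a b = 0 := by
      intro i a b
      by_contra hne
      have hpne : p i a b ≠ 0 := hdsupp i a b hne
      have hadj : (Hmat (p i)).Adj (Sum.inl a) (Sum.inr b) := hmat_adj.mpr hpne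
      have hbridge : (Hmat (p i)).IsBridge s(Sum.inl a, Sum.inr b) :=
        (isAcyclic_iff_forall_edge_isBridge.mp (hac i)) ((Hmat (p i)).mem_edgeSet.mpr hadj)
      rw [isBridge_iff] at hbridge
      set G' : SimpleGraph (Fin m ⊕ Fin m) :=
        Hmat (p i) \ fromEdgeSet {s(Sum.inl a, Sum.inr b)} with hG'
      have hkey := cutB (fun a' b' => d i a' b') (fun u => G'.Reachable (Sum.inl a) u) a b
        (SimpleGraph.Reachable.refl _) hbridge ?_
      · have e1 : ∀ a', (∑ b', d i a' b') = 0 := fun a' => hρz a' i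
        have e2 : ∀ b', (∑ a', d i a' b') = 0 := fun b' => hσz b' i
        simp only [e1, e2, ite_self, Finset.sum_const_zero] at hkey
        apply hne
        rw [← hkey]
        norm_num
      · intro a' b' hdne hne'
        have hadj' : G'.Adj (Sum.inl a') (Sum.inr b') := by
          rw [hG']
          rw [SimpleGraph.sdiff_adj]
          constructor
          · exact hmat_adj.mpr (hdsupp i a' b' hdne)
          · rw [SimpleGraph.fromEdgeSet_adj]
            intro ⟨hmem, _⟩
            rw [Set.mem_singleton_iff, Sym2.eq_iff] at hmem
            rcases hmem with ⟨ha', hb'⟩ | ⟨ha', hb'⟩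
            · exact hne' ⟨Sum.inl.inj ha', Sum.inr.inj hb'⟩
            · exact (Sum.inl_ne_inr ha')
        exact ⟨fun h => h.trans hadj'.reachable, fun h => h.trans hadj'.symm.reachable⟩
    -- conclude
    have hx12 : x₁ = x₂ := by
      funext i
      ext a b
      have := hd0 i a b
      rw [hd] at this
      simpa [sub_eq_zero] using this
    have hx1p : x₁ = p := by
      rw [← hcomb, hx12]
      rw [← add_smul, htt, one_smul]
    constructor
    · exact hx1p
    · rw [← hx12]; exact hx1p
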